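/- Let κ : ℝ → ℝ be differentiable and non-increasing on [0, ∞), and let κ'_min ≤ min over z ∈ [0, T] of κ'(z)·z/κ(z), with κ'_min < 0 and κ(z) > 0 on [0,T]. Then for any γ > 0 and any a ≥ 0 with (1+γ)a ≤ T, we have κ((1+γ)a) ≥ κ(a)·(1 + γ·κ'_min). -/
import Mathlib


/-- Key per-term inequality: if κ is differentiable, positive, non-increasing on [0,T]
and κmin ≤ κ'(z)·z/κ(z) on [0,T] with κmin < 0, then for γ > 0 and a ≥ 0 with
(1+γ)a ≤ T, κ((1+γ)a) ≥ κ(a)·(1 + γ·κmin). -/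
theorem kernel_stretch_bound
    (κ : ℝ → ℝ) (T κmin : ℝ)
    (hdiff : ∀ t ∈ Set.Icc (0 : ℝ) T, DifferentiableAt ℝ κ t)
    (hmono : AntitoneOn κ (Set.Icc (0 : ℝ) T))
    (hpos : ∀ z ∈ Set.Icc (0 : ℝ) T, 0 < κ z)
    (hκmin : ∀ z ∈ Set.Icc (0 : ℝ) T, κmin ≤ deriv κ z * z / κ z)
    (hneg : κmin < 0) :
    ∀ γ : ℝ, 0 < γ → ∀ a : ℝ, 0 ≤ a → (1 + γ) * a ≤ T →
      κ ((1 + γ) * a) ≥ κ a * (1 + γ * κmin) := by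
  intro γ hγ a ha hT
  rcases eq_or_lt_of_le ha with heq | hapos
  · -- a = 0
    have hz : (0:ℝ) ∈ Set.Icc (0:ℝ) T := ⟨le_rfl, by nlinarith⟩
    have h0 : 0 < κ 0 := hpos 0 hz
    rw [← heq]
    have : (1 + γ) * (0:ℝ) = 0 := by ring
    rw [this]
    nlinarith [mul_neg_of_pos_of_neg (mul_pos h0 hγ) hneg]
  · -- a > 0
    have haT : a ≤ T := by nlinarith
    have haMem : a ∈ Set.Icc (0:ℝ) T := ⟨ha, haT⟩
    have hMem : ∀ t ∈ Set.Icc (1:ℝ) (1+γ), t * a ∈ Set.Icc (0:ℝ) T := by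
      intro t ht
      constructor
      · nlinarith [ht.1]
      · nlinarith [ht.2]
    set g : ℝ → ℝ := fun t => κ (t * a) with hg
    have hderiv' : ∀ t ∈ Set.Icc (1:ℝ) (1+γ),
        HasDerivAt g (deriv κ (t * a) * a) t := by
      intro t ht
      have hmem : t * a ∈ Set.Icc (0:ℝ) T := hMem t ht
      have h1 : HasDerivAt (fun t : ℝ => t * a) a t := by
        simpa using (hasDerivAt_id t).mul_const a
      exact ((hdiff _ hmem).hasDerivAt).comp t h1
    have hderiv : ∀ t ∈ Set.Ioo (1:ℝ) (1+γ),
        HasDerivAt g (deriv κ (t * a) * a) t :=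
      fun t ht => hderiv' t (Set.Ioo_subset_Icc_self ht)
    have hcont : ContinuousOn g (Set.Icc (1:ℝ) (1+γ)) :=
      fun t ht => (hderiv' t ht).continuousAt.continuousWithinAt
    obtain ⟨c, hc, hceq⟩ := exists_hasDerivAt_eq_slope g
      (fun t => deriv κ (t * a) * a) (by linarith) hcont hderiv
    have hca : c * a ∈ Set.Icc (0:ℝ) T := hMem c ⟨hc.1.le, hc.2.le⟩
    have hκca : 0 < κ (c * a) := hpos _ hca
    have hκa : 0 < κ a := hpos _ haMem
    have hcapos : 0 < c * a := by nlinarith [hc.1]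
    -- deriv κ (c*a) ≥ κmin * κ (c*a) / (c*a)
    have hd : deriv κ (c * a) * (c * a) ≥ κmin * κ (c * a) := by
      have := hκmin _ hca
      rw [ge_iff_le, ← le_div_iff₀ hκca] at *
      calc κmin ≤ deriv κ (c*a) * (c*a) / κ (c*a) := hκmin _ hca
        _ = deriv κ (c*a) * (c*a) / κ (c*a) := rfl
    have hκle : κ (c * a) ≤ κ a := by
      apply hmono haMem hca
      nlinarith [hc.1]
    -- key bound: deriv κ (c*a) * a ≥ κmin * κ a
    have hkey : deriv κ (c * a) * a ≥ κmin * κ a := by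
      have hc1 : 1 < c := hc.1
      have h1 : deriv κ (c * a) * a * c ≥ κmin * κ (c * a) := by
        calc deriv κ (c*a) * a * c = deriv κ (c*a) * (c*a) := by ring
          _ ≥ κmin * κ (c * a) := hd
      have h2 : κmin * κ (c * a) ≥ κmin * κ a := by nlinarith
      rcases le_or_gt 0 (deriv κ (c * a) * a) with hD | hD
      · nlinarith [mul_neg_of_neg_of_pos hneg hκa]
      · have h3 : deriv κ (c * a) * a * c ≤ deriv κ (c * a) * a := by nlinarith
        linarith
    -- slope: g(1+γ) - g 1 = γ * (deriv κ (c*a) * a)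
    have hslope : κ ((1+γ) * a) - κ a = γ * (deriv κ (c * a) * a) := by
      have : deriv κ (c * a) * a = (g (1+γ) - g 1) / (1 + γ - 1) := hceq
      have hγ' : (1 + γ - 1) = γ := by ring
      rw [hγ'] at this
      have := (div_eq_iff (ne_of_gt hγ)).mp this.symm
      simp only [hg, one_mul] at this
      linarith [this]
    nlinarith [hkey]
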